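/- arXiv:1407.5389 — 3 statements merged into one kernel-verified Lean document; each statement's English description precedes it below -/
import Mathlib

section
/- Let ψ₁,…,ψₙ be linearly independent unit vectors in an n-dimensional Hilbert space H, let ρ = ∑_i q_i |ψ_i⟩⟨ψ_i| with all q_i > 0, and define w_i = ρ^{-1/2} (√q_i ψ_i). Then (w_i)_{i=1}^n is an orthonormal basis of H. (That is, the pretty good measurement of a linearly independent pure state ensemble is a rank-one projective measurement.) -/
/-- The rank-one operator `|x⟩⟨y| : v ↦ ⟪y, v⟫ • x`. -/
noncomputable def ketBra {H : Type*} [NormedAddCommGroup H] [InnerProductSpace ℂ H]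
    (x y : H) : H →ₗ[ℂ] H :=
  (innerₛₗ ℂ y).smulRight x

/-- The pretty good measurement of an ensemble of linearly independent pure
states is a rank-one projective measurement: the vectors
`w i = ρ^{-1/2} (√qᵢ ψᵢ)` form an orthonormal basis. Here `S` plays the role of
`ρ^{-1/2}`: it is the (unique) symmetric positive operator with `S ∘ S ∘ ρ = 1`. -/
theorem pgm_orthonormal {n : ℕ} {H : Type*} [NormedAddCommGroup H]
    [InnerProductSpace ℂ H] [FiniteDimensional ℂ H] (hdim : Module.finrank ℂ H = n)
    (ψ : Fin n → H) (hLI : LinearIndependent ℂ ψ) (hnorm : ∀ i, ‖ψ i‖ = 1)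
    (q : Fin n → ℝ) (hq : ∀ i, 0 < q i)
    (ρ : H →ₗ[ℂ] H) (hρ : ρ = ∑ i, (q i : ℂ) • ketBra (ψ i) (ψ i))
    (S : H →ₗ[ℂ] H) (hSsymm : S.IsSymmetric)
    (hSpos : ∀ v : H, 0 ≤ RCLike.re (inner ℂ v (S v) : ℂ))
    (hSinv : S ∘ₗ S ∘ₗ ρ = LinearMap.id)
    (w : Fin n → H) (hw : ∀ i, w i = S ((Real.sqrt (q i) : ℂ) • ψ i)) :
    Orthonormal ℂ w := by
  -- S ρ S = id
  have h1 : S * (S * ρ) = 1 := hSinv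
  have h2 : (S * ρ) * S = 1 := mul_eq_one_comm.mp h1
  have hSρS : ∀ v : H, S (ρ (S v)) = v := by
    intro v
    have := congrFun (congrArg (fun f : H →ₗ[ℂ] H => (f : H → H)) h2) v
    simpa using this
  -- S is injective
  have hinj : Function.Injective S := by
    intro x y hxy
    have hx := hSρS x
    have hy := hSρS y
    rw [hxy] at hx
    rw [hx] at hy
    exact hy.symm ▸ rfl
  -- w is linearly independent
  have hc : ∀ k, (Real.sqrt (q k) : ℂ) ≠ 0 := by
    intro k
    simp only [ne_eq, Complex.ofReal_eq_zero]
    exact (Real.sqrt_pos.mpr (hq k)).ne'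
  have hφ : LinearIndependent ℂ (fun i => (Real.sqrt (q i) : ℂ) • ψ i) := by
    have := hLI.units_smul (fun i => Units.mk0 _ (hc i))
    exact this
  have hLIw : LinearIndependent ℂ w := by
    have := hφ.map' S (LinearMap.ker_eq_bot.mpr hinj)
    have hfun : w = fun i => S ((Real.sqrt (q i) : ℂ) • ψ i) := funext hw
    rw [hfun]
    exact this
  -- frame identity
  have hframe : ∀ v : H, ∑ k, (inner ℂ (w k) v : ℂ) • w k = v := by
    intro v
    have hin : ∀ k, (inner ℂ (w k) v : ℂ)
        = (Real.sqrt (q k) : ℂ) * (inner ℂ (ψ k) (S v) : ℂ) := by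
      intro k
      rw [hw, hSsymm]
      rw [inner_smul_left]
      simp
    have hterm : ∀ k, (inner ℂ (w k) v : ℂ) • w k
        = S ((q k : ℂ) • (inner ℂ (ψ k) (S v) : ℂ) • ψ k) := by
      intro k
      rw [hin, hw, ← map_smul]
      congr 1
      have hqq : ((Real.sqrt (q k) : ℂ)) * ((Real.sqrt (q k) : ℂ)) = (q k : ℂ) := by
        rw [← Complex.ofReal_mul, Real.mul_self_sqrt (hq k).le]
      rw [smul_smul, smul_smul]
      congr 1
      rw [← hqq]
      ring
    calc ∑ k, (inner ℂ (w k) v : ℂ) • w k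
        = S (ρ (S v)) := by
          rw [hρ, Finset.sum_congr rfl fun k _ => hterm k, ← map_sum]
          congr 1
          simp [ketBra]
      _ = v := hSρS v
  -- conclude orthonormality
  rw [orthonormal_iff_ite]
  intro i j
  have hj := hframe (w j)
  have hzero : ∑ k, ((inner ℂ (w k) (w j) : ℂ) - if k = j then 1 else 0) • w k = 0 := by
    rw [Finset.sum_congr rfl fun k _ => sub_smul _ _ _, Finset.sum_sub_distrib, hj]
    simp [ite_smul]
  have := Fintype.linearIndependent_iff.mp hLIw _ hzero i
  have h := sub_eq_zero.mp this
  simpa using h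
end

section
/- Let X be a positive definite n×n Hermitian matrix with positive diagonal D² (D = Diag(√X_{11},…,√X_{nn})), and let G be positive definite with X² = DGD. Define the linear map J on Hermitian matrices by J(δX) = (δX·X − D_δ D⁻¹ X²) + (δX·X − D_δ D⁻¹ X²)†, where D_δ = Diag(δx_{11}/(2√X_{11}),…) is the diagonal matrix with entries (D_δ)_{ii} = (δX)_{ii}/(2 d_{ii}). Then J is injective: J(δX) = 0 implies δX = 0. -/
open scoped ComplexOrder
open Matrix Finset

/-- Nonsingularity of the Jacobian `J` of `X ↦ X² − D(X) G D(X)` at the optimal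
point: `J(δX) = (δX·X − D_δ D⁻¹ X²) + (δX·X − D_δ D⁻¹ X²)†` vanishes only at
`δX = 0`, where `(D_δ D⁻¹)_{ii} = (δX)_{ii}/(2 dᵢᵢ²)`. -/
theorem jacobian_injective {n : ℕ} {G X : Matrix (Fin n) (Fin n) ℂ}
    (hG : G.PosDef) (hX : X.PosDef)
    (d : Fin n → ℝ) (hd : ∀ i, 0 < d i) (hdiag : ∀ i, X i i = ((d i : ℂ))^2)
    (hXsq : X * X =
      (Matrix.diagonal fun i => (d i : ℂ)) * G * (Matrix.diagonal fun i => (d i : ℂ))) :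
    ∀ δX : Matrix (Fin n) (Fin n) ℂ, δX.IsHermitian →
      (let M := δX * X -
        (Matrix.diagonal fun i => δX i i / (2 * ((d i : ℂ))^2)) * (X * X);
       M + M.conjTranspose = 0) → δX = 0 := by
  intro δX hδ hM
  classical
  set S : Matrix (Fin n) (Fin n) ℂ :=
    Matrix.diagonal (fun i => δX i i / (2 * ((d i : ℂ))^2)) with hSdef
  have hM' : (δX * X - S * (X * X)) + (δX * X - S * (X * X))ᴴ = 0 := hM
  have hXh : X.IsHermitian := hX.1
  have hδdiag : ∀ i, star (δX i i) = δX i i := fun i => hδ.apply i i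
  have hdne : ∀ i, (2 * ((d i : ℂ))^2) ≠ 0 := by
    intro i
    have : (d i : ℂ) ≠ 0 := by exact_mod_cast (hd i).ne'
    positivity
  have hSh : S.IsHermitian := by
    rw [hSdef, Matrix.IsHermitian, Matrix.diagonal_conjTranspose]
    refine congrArg Matrix.diagonal (funext fun i => ?_)
    show star (δX i i / (2 * ((d i : ℂ))^2)) = _
    rw [star_div₀, hδdiag i]
    congr 1
    simp [star_mul', star_pow, Complex.star_def, Complex.conj_ofReal]
  -- the key Lyapunov-type equation
  have key : δX * X + X * δX = S * (X * X) + (X * X) * S := by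
    have e : (δX * X - S * (X * X))ᴴ = X * δX - (X * X) * S := by
      rw [conjTranspose_sub, conjTranspose_mul, conjTranspose_mul, hδ.eq, hXh.eq,
        conjTranspose_mul, hXh.eq, hSh.eq]
    rw [e] at hM'
    have h3 : (δX * X + X * δX) - (S * (X * X) + (X * X) * S) =
        (δX * X - S * (X * X)) + (X * δX - (X * X) * S) := by abel
    rw [hM'] at h3
    exact sub_eq_zero.mp h3
  -- spectral decomposition
  set U : Matrix (Fin n) (Fin n) ℂ := (hXh.eigenvectorUnitary : Matrix (Fin n) (Fin n) ℂ) with hUdef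
  set μ : Fin n → ℝ := hXh.eigenvalues with hμdef
  have hμpos : ∀ i, 0 < μ i := fun i => hX.eigenvalues_pos i
  have hU1 : U * star U = 1 := Unitary.mul_star_self_of_mem hXh.eigenvectorUnitary.2
  have hU2 : star U * U = 1 := Unitary.star_mul_self_of_mem hXh.eigenvectorUnitary.2
  set Λ : Matrix (Fin n) (Fin n) ℂ := Matrix.diagonal (fun i => (μ i : ℂ)) with hΛdef
  have hXdiag : star U * X * U = Λ := by
    simpa [Unitary.conjStarAlgAut_star_apply, Function.comp_def] using hXh.conjStarAlgAut_star_eigenvectorUnitary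
  have cancel : ∀ M : Matrix (Fin n) (Fin n) ℂ, U * (star U * M) = M := fun M => by
    rw [← Matrix.mul_assoc, hU1, Matrix.one_mul]
  have conj_mul : ∀ A B : Matrix (Fin n) (Fin n) ℂ,
      star U * (A * B) * U = (star U * A * U) * (star U * B * U) := fun A B => by
    simp only [Matrix.mul_assoc, cancel]
  set E : Matrix (Fin n) (Fin n) ℂ := star U * δX * U with hEdef
  set T : Matrix (Fin n) (Fin n) ℂ := star U * S * U with hTdef
  have keyC : E * Λ + Λ * E = T * (Λ * Λ) + (Λ * Λ) * T := by
    have h := congrArg (fun M => star U * M * U) key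
    simp only [Matrix.mul_add, Matrix.add_mul] at h
    rw [conj_mul δX X, conj_mul X δX, conj_mul S (X*X), conj_mul (X*X) S, conj_mul X X,
      hXdiag] at h
    exact h
  have hΛΛ : Λ * Λ = Matrix.diagonal (fun i => ((μ i : ℂ))^2) := by
    rw [hΛdef, Matrix.diagonal_mul_diagonal]
    refine congrArg Matrix.diagonal (funext fun i => ?_)
    ring
  have entry : ∀ i j, E i j * ((μ i : ℂ) + (μ j : ℂ)) =
      T i j * (((μ i : ℂ))^2 + ((μ j : ℂ))^2) := by
    intro i j
    have hkey2 := keyC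
    rw [hΛΛ, hΛdef] at hkey2
    have h := congrFun (congrFun hkey2 i) j
    simp only [Matrix.add_apply, Matrix.mul_diagonal, Matrix.diagonal_mul] at h
    linear_combination h
  have hTh : T.IsHermitian := by
    show (star U * S * U)ᴴ = star U * S * U
    rw [conjTranspose_mul, conjTranspose_mul, hSh.eq, ← Matrix.star_eq_conjTranspose U,
      ← Matrix.star_eq_conjTranspose (star U), star_star, Matrix.mul_assoc]
  -- trace identity from the definition of S
  have trace1 : Matrix.trace (S * δX) = 2 * Matrix.trace (S * X * S) := by
    rw [Matrix.trace, Matrix.trace, Finset.mul_sum]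
    refine Finset.sum_congr rfl fun i _ => ?_
    have h1 : (S * δX) i i = (δX i i / (2 * ((d i : ℂ))^2)) * δX i i := by
      rw [hSdef]; simp [Matrix.diagonal_mul]
    have h2 : (S * X * S) i i
        = (δX i i / (2 * ((d i : ℂ))^2)) * X i i * (δX i i / (2 * ((d i : ℂ))^2)) := by
      rw [hSdef]; simp [Matrix.diagonal_mul, Matrix.mul_diagonal]
    show (S * δX) i i = 2 * (S * X * S) i i
    rw [h1, h2, hdiag i]
    have hdc : (d i : ℂ) ≠ 0 := by exact_mod_cast (hd i).ne'
    field_simp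
  have trinv : ∀ M : Matrix (Fin n) (Fin n) ℂ,
      Matrix.trace (star U * M * U) = Matrix.trace M := fun M => by
    rw [Matrix.trace_mul_comm, ← Matrix.mul_assoc, hU1, Matrix.one_mul]
  have trace2 : Matrix.trace (T * E) = 2 * Matrix.trace (T * Λ * T) := by
    have e1 : T * E = star U * (S * δX) * U := (conj_mul S δX).symm
    have e2 : T * Λ * T = star U * (S * X * S) * U := by
      rw [conj_mul (S * X) S, conj_mul S X, hXdiag]
    rw [e1, e2, trinv, trinv, trace1]
  -- entrywise real sums
  set a : Fin n → Fin n → ℝ := fun i j => Complex.normSq (T i j) with hadef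
  have hTstar : ∀ i j, T j i = star (T i j) := fun i j => (hTh.apply j i).symm
  have hμne : ∀ i j, ((μ i : ℂ) + (μ j : ℂ)) ≠ 0 := by
    intro i j
    have h : (0:ℝ) < μ i + μ j := add_pos (hμpos i) (hμpos j)
    have h2 : ((μ i + μ j : ℝ) : ℂ) ≠ 0 := by exact_mod_cast h.ne'
    simpa using h2
  have hTE : ∀ i j, T i j * E j i
      = ((a i j * ((μ j ^ 2 + μ i ^ 2) / (μ j + μ i)) : ℝ) : ℂ) := by
    intro i j
    have hE : E j i = star (T i j) * (((μ j : ℂ))^2 + ((μ i : ℂ))^2) / ((μ j : ℂ) + (μ i : ℂ)) := by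
      rw [eq_div_iff (hμne j i), ← hTstar i j]
      exact entry j i
    rw [hE, hadef]
    simp only [RCLike.star_def]
    have hne : ((μ j : ℂ) + (μ i : ℂ)) ≠ 0 := hμne j i
    have hner : (μ j + μ i : ℝ) ≠ 0 := by
      have := hμpos i; have := hμpos j; linarith
    push_cast
    field_simp
    linear_combination (((μ j : ℂ))^2 + ((μ i : ℂ))^2) * Complex.mul_conj (T i j)
  have hTΛT : ∀ i, (T * Λ * T) i i = ((∑ j, a i j * μ j : ℝ) : ℂ) := by
    intro i
    rw [Matrix.mul_apply]
    push_cast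
    refine Finset.sum_congr rfl fun j _ => ?_
    rw [Matrix.mul_diagonal, hTstar i j]
    simp only [RCLike.star_def]
    push_cast
    linear_combination ((μ j : ℂ)) * Complex.mul_conj (T i j)
  have trTE : Matrix.trace (T * E)
      = ((∑ i, ∑ j, a i j * ((μ j ^ 2 + μ i ^ 2) / (μ j + μ i)) : ℝ) : ℂ) := by
    rw [Matrix.trace]
    push_cast
    refine Finset.sum_congr rfl fun i _ => ?_
    rw [Matrix.diag_apply, Matrix.mul_apply]
    push_cast
    refine Finset.sum_congr rfl fun j _ => ?_
    rw [hTE i j]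
    push_cast
    ring
  have trTΛT : Matrix.trace (T * Λ * T) = ((∑ i, ∑ j, a i j * μ j : ℝ) : ℂ) := by
    rw [Matrix.trace]
    push_cast
    refine Finset.sum_congr rfl fun i _ => ?_
    rw [Matrix.diag_apply, hTΛT i]
    push_cast
    ring
  have hreal : (∑ i, ∑ j, a i j * ((μ j ^ 2 + μ i ^ 2) / (μ j + μ i)))
      = 2 * ∑ i, ∑ j, a i j * μ j := by
    have := trace2
    rw [trTE, trTΛT] at this
    exact_mod_cast this
  -- symmetry of a
  have hsym : ∀ i j, a i j = a j i := by
    intro i j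
    rw [hadef]
    simp only
    rw [hTstar j i]
    simp only [RCLike.star_def]
    exact Complex.normSq_conj _
  have hswap : (∑ i, ∑ j, a i j * μ j) = ∑ i, ∑ j, a i j * μ i := by
    rw [Finset.sum_comm]
    refine Finset.sum_congr rfl fun i _ => Finset.sum_congr rfl fun j _ => ?_
    rw [hsym j i]
  have hzero : ∑ i, ∑ j, a i j * ((μ i + μ j) - (μ j ^ 2 + μ i ^ 2) / (μ j + μ i)) = 0 := by
    have expand : ∀ i j, a i j * ((μ i + μ j) - (μ j ^ 2 + μ i ^ 2) / (μ j + μ i))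
        = a i j * μ i + a i j * μ j - a i j * ((μ j ^ 2 + μ i ^ 2) / (μ j + μ i)) := by
      intro i j; ring
    simp only [expand, Finset.sum_sub_distrib, Finset.sum_add_distrib]
    rw [← hswap, hreal]
    ring
  have hcpos : ∀ i j, 0 < (μ i + μ j) - (μ j ^ 2 + μ i ^ 2) / (μ j + μ i) := by
    intro i j
    have h1 := hμpos i
    have h2 := hμpos j
    rw [sub_pos, div_lt_iff₀ (by linarith)]
    nlinarith
  have hT0 : ∀ i j, T i j = 0 := by
    intro i j
    have houter : ∀ i ∈ Finset.univ (α := Fin n),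
        0 ≤ ∑ j, a i j * ((μ i + μ j) - (μ j ^ 2 + μ i ^ 2) / (μ j + μ i)) := by
      intro i _
      exact Finset.sum_nonneg fun j _ =>
        mul_nonneg (Complex.normSq_nonneg _) (hcpos i j).le
    have hinner := (Finset.sum_eq_zero_iff_of_nonneg houter).mp hzero i (Finset.mem_univ i)
    have hterm : ∀ j ∈ Finset.univ (α := Fin n),
        0 ≤ a i j * ((μ i + μ j) - (μ j ^ 2 + μ i ^ 2) / (μ j + μ i)) := fun j _ =>
      mul_nonneg (Complex.normSq_nonneg _) (hcpos i j).le
    have h0 := (Finset.sum_eq_zero_iff_of_nonneg hterm).mp hinner j (Finset.mem_univ j)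
    have ha0 : a i j = 0 := by
      rcases mul_eq_zero.mp h0 with h | h
      · exact h
      · exact absurd h (hcpos i j).ne'
    exact Complex.normSq_eq_zero.mp ha0
  have hE0 : E = 0 := by
    ext i j
    have h := entry i j
    rw [hT0 i j, zero_mul, mul_eq_zero] at h
    rcases h with h | h
    · simpa using h
    · exact absurd h (hμne i j)
  have hδeq : δX = U * E * star U := by
    calc δX = (U * star U) * δX * (U * star U) := by rw [hU1, Matrix.one_mul, Matrix.mul_one]
      _ = U * (star U * δX * U) * star U := by simp only [Matrix.mul_assoc]
      _ = U * E * star U := rfl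
  rw [hδeq, hE0, Matrix.mul_zero, Matrix.zero_mul]
end

section
/- Let X be positive definite with eigendecomposition X = ∑ g_i |g_i⟩⟨g_i|, and let δX be Hermitian and Δ a real diagonal matrix such that δX·X − Δ·X² is anti-Hermitian. Then ⟨g_i| δX |g_j⟩ = ((g_i² + g_j²)/(g_i + g_j)) · ⟨g_i| Δ |g_j⟩ for all i, j; consequently δX = ∑_{i,j} ((g_i²+g_j²)/(g_i+g_j)) ⟨g_i|Δ|g_j⟩ |g_i⟩⟨g_j|. In particular, if Δ = 0 then δX = 0. -/
open scoped ComplexOrder Matrix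

/-- Conjugation of a sandwich. -/
private lemma aux_conj_sandwich {n : ℕ} (A : Matrix (Fin n) (Fin n) ℂ) (x y : Fin n → ℂ) :
    star (star y ⬝ᵥ (A *ᵥ x)) = star x ⬝ᵥ (Aᴴ *ᵥ y) := by
  simp [dotProduct, Matrix.mulVec, Matrix.conjTranspose_apply, Finset.mul_sum, map_sum]
  rw [Finset.sum_comm]
  refine Finset.sum_congr rfl fun k _ => Finset.sum_congr rfl fun l _ => by ring

private lemma aux_sum_eq {n : ℕ} (v : Fin n → Fin n → ℂ) (M : Matrix (Fin n) (Fin n) ℂ) :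
    ∑ i, ∑ j, M i j • Matrix.vecMulVec (v i) (star (v j))
      = (Matrix.of fun k i => v i k) * M * (Matrix.of fun k i => v i k)ᴴ := by
  funext k l
  simp only [Matrix.sum_apply, Matrix.smul_apply, Matrix.vecMulVec_apply, smul_eq_mul,
    Matrix.mul_apply, Matrix.conjTranspose_apply, Matrix.of_apply, Finset.sum_mul, Pi.star_apply]
  rw [Finset.sum_comm]
  refine Finset.sum_congr rfl fun i _ => Finset.sum_congr rfl fun j _ => by
    simp [RCLike.star_def]; ring

private lemma aux_sandwich_entry {n : ℕ} (v : Fin n → Fin n → ℂ)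
    (A : Matrix (Fin n) (Fin n) ℂ) (i j : Fin n) :
    star (v i) ⬝ᵥ (A *ᵥ v j)
      = ((Matrix.of fun k i => v i k)ᴴ * A * (Matrix.of fun k i => v i k)) i j := by
  simp only [dotProduct, Matrix.mulVec, Matrix.mul_apply, Matrix.conjTranspose_apply,
    Matrix.of_apply, Pi.star_apply, dotProduct, Finset.sum_mul, Finset.mul_sum]
  rw [Finset.sum_comm]
  refine Finset.sum_congr rfl fun p _ => Finset.sum_congr rfl fun q _ => by
    simp [RCLike.star_def]; ring

/-- If `δX·X − Δ·X²` is anti-Hermitian, where `X = ∑ᵢ gᵢ |gᵢ⟩⟨gᵢ|` is positive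
definite and `Δ` is real diagonal, then
`⟨gᵢ|δX|gⱼ⟩ = ((gᵢ²+gⱼ²)/(gᵢ+gⱼ)) ⟨gᵢ|Δ|gⱼ⟩` for all `i, j`; consequently
`δX = ∑ᵢⱼ ((gᵢ²+gⱼ²)/(gᵢ+gⱼ)) ⟨gᵢ|Δ|gⱼ⟩ |gᵢ⟩⟨gⱼ|`, and `Δ = 0` forces `δX = 0`. -/
theorem antiHermitian_constraint {n : ℕ} (g : Fin n → ℝ) (hg : ∀ i, 0 < g i)
    (v : Fin n → Fin n → ℂ)
    (hortho : ∀ i j, (∑ k, (starRingEnd ℂ) (v i k) * v j k) = if i = j then 1 else 0)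
    (X : Matrix (Fin n) (Fin n) ℂ)
    (hX : ∀ k l, X k l = ∑ i, (g i : ℂ) * v i k * (starRingEnd ℂ) (v i l))
    (δX : Matrix (Fin n) (Fin n) ℂ) (hδX : δX.IsHermitian)
    (δ : Fin n → ℝ) (Δ : Matrix (Fin n) (Fin n) ℂ)
    (hΔ : Δ = Matrix.diagonal fun i => (δ i : ℂ))
    (hanti : (δX * X - Δ * (X * X)).conjTranspose = -(δX * X - Δ * (X * X))) :
    (∀ i j, star (v i) ⬝ᵥ (δX *ᵥ v j) =
      ((((g i)^2 + (g j)^2) / (g i + g j) : ℝ) : ℂ) * (star (v i) ⬝ᵥ (Δ *ᵥ v j))) ∧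
    δX = ∑ i, ∑ j, (((((g i)^2 + (g j)^2) / (g i + g j) : ℝ) : ℂ) *
      (star (v i) ⬝ᵥ (Δ *ᵥ v j))) • Matrix.vecMulVec (v i) (star (v j)) ∧
    (Δ = 0 → δX = 0) := by
  -- eigenvectors
  have hXv : ∀ j, X *ᵥ v j = (g j : ℂ) • v j := by
    intro j
    funext k
    simp only [Matrix.mulVec, dotProduct, hX, Finset.sum_mul, Pi.smul_apply, smul_eq_mul]
    rw [Finset.sum_comm]
    have h : ∀ i, ∑ l, (g i : ℂ) * v i k * (starRingEnd ℂ) (v i l) * v j l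
        = (g i : ℂ) * v i k * (if i = j then 1 else 0) := by
      intro i
      rw [← hortho i j, Finset.mul_sum]
      exact Finset.sum_congr rfl fun l _ => by ring
    simp [h, Finset.sum_ite_eq]
  -- Hermiticity of Δ
  have hΔH : Δᴴ = Δ := by
    subst hΔ
    simp [Matrix.diagonal_conjTranspose]
  -- action of M := δX * X - Δ * (X * X)
  have hM : ∀ t, (δX * X - Δ * (X * X)) *ᵥ v t
      = (g t : ℂ) • (δX *ᵥ v t) - ((g t : ℂ) * (g t : ℂ)) • (Δ *ᵥ v t) := by
    intro t
    rw [Matrix.sub_mulVec, ← Matrix.mulVec_mulVec, hXv, Matrix.mulVec_smul,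
      ← Matrix.mulVec_mulVec, ← Matrix.mulVec_mulVec, hXv, Matrix.mulVec_smul, hXv,
      Matrix.mulVec_smul, Matrix.mulVec_smul, smul_smul]
  -- hermiticity of sandwiches
  have hB : ∀ i j, (starRingEnd ℂ) (star (v j) ⬝ᵥ (δX *ᵥ v i)) = star (v i) ⬝ᵥ (δX *ᵥ v j) := by
    intro i j
    have h := aux_conj_sandwich δX (v i) (v j)
    rw [hδX.eq] at h
    exact h
  have hD : ∀ i j, (starRingEnd ℂ) (star (v j) ⬝ᵥ (Δ *ᵥ v i)) = star (v i) ⬝ᵥ (Δ *ᵥ v j) := by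
    intro i j
    have h := aux_conj_sandwich Δ (v i) (v j)
    rw [hΔH] at h
    exact h
  -- main entrywise identity
  have key : ∀ i j, star (v i) ⬝ᵥ (δX *ᵥ v j) =
      ((((g i)^2 + (g j)^2) / (g i + g j) : ℝ) : ℂ) * (star (v i) ⬝ᵥ (Δ *ᵥ v j)) := by
    intro i j
    have h1 : star (v i) ⬝ᵥ ((δX * X - Δ * (X * X))ᴴ *ᵥ v j)
        = star (v i) ⬝ᵥ ((-(δX * X - Δ * (X * X))) *ᵥ v j) := by rw [hanti]
    rw [← aux_conj_sandwich, hM i, Matrix.neg_mulVec, hM j] at h1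
    simp only [dotProduct_neg, dotProduct_sub, dotProduct_smul,
      smul_eq_mul, star_sub, star_mul', Complex.star_def, Complex.conj_ofReal, map_mul] at h1
    rw [hB, hD] at h1
    have hne : ((g i : ℂ) + (g j : ℂ)) ≠ 0 := by
      have : (0:ℝ) < g i + g j := add_pos (hg i) (hg j)
      exact_mod_cast ne_of_gt (by exact_mod_cast this : (0:ℂ) < ((g i + g j : ℝ) : ℂ))
    push_cast
    field_simp
    linear_combination h1
  refine ⟨key, ?_, ?_⟩
  · -- reconstruction
    have hU : (Matrix.of fun k i => v i k) * (Matrix.of fun k i => v i k)ᴴ = 1 := by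
      rw [mul_eq_one_comm]
      funext i j
      simp [Matrix.mul_apply, Matrix.conjTranspose_apply, hortho, Matrix.one_apply]
    set U : Matrix (Fin n) (Fin n) ℂ := Matrix.of fun k i => v i k with hUdef
    have : ∑ i, ∑ j, (((((g i)^2 + (g j)^2) / (g i + g j) : ℝ) : ℂ) *
        (star (v i) ⬝ᵥ (Δ *ᵥ v j))) • Matrix.vecMulVec (v i) (star (v j))
        = U * (Uᴴ * δX * U) * Uᴴ := by
      rw [← aux_sum_eq v (Uᴴ * δX * U)]
      refine Finset.sum_congr rfl fun i _ => Finset.sum_congr rfl fun j _ => ?_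
      rw [← key, aux_sandwich_entry]
    rw [this]
    rw [show U * (Uᴴ * δX * U) * Uᴴ = (U * Uᴴ) * δX * (U * Uᴴ) by noncomm_ring, hU]
    simp
  · intro h0
    subst h0
    have : ∀ i j, star (v i) ⬝ᵥ (δX *ᵥ v j) = 0 := by
      intro i j
      rw [key]
      simp
    -- δX = U * (Uᴴ δX U) * Uᴴ = 0
    have hU : (Matrix.of fun k i => v i k) * (Matrix.of fun k i => v i k)ᴴ = 1 := by
      rw [mul_eq_one_comm]
      funext i j
      simp [Matrix.mul_apply, Matrix.conjTranspose_apply, hortho, Matrix.one_apply]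
    set U : Matrix (Fin n) (Fin n) ℂ := Matrix.of fun k i => v i k with hUdef
    have hz : Uᴴ * δX * U = 0 := by
      funext i j
      rw [← aux_sandwich_entry, this]
      simp
    calc δX = (U * Uᴴ) * δX * (U * Uᴴ) := by rw [hU]; simp
    _ = U * (Uᴴ * δX * U) * Uᴴ := by noncomm_ring
    _ = 0 := by rw [hz]; simp
end
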